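/- arXiv:1805.03829 — 7 statements merged into one kernel-verified Lean document; each statement's English description precedes it below -/
import Mathlib

section
/- Cycle mutual information tensorizes: for joint distributions p on X_a × X_b and integer k ≥ 1, I°_ℓ(p^{⊗k}) = k · I°_ℓ(p), where p^{⊗k} is the k-fold product distribution on X_a^k × X_b^k. -/
open Matrix Finset

private lemma sqrt_prod' {ι : Type*} (s : Finset ι) (f : ι → ℝ) (hf : ∀ i, 0 ≤ f i) :
    Real.sqrt (∏ i ∈ s, f i) = ∏ i ∈ s, Real.sqrt (f i) := by
  induction s using Finset.cons_induction with
  | empty => simp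
  | cons a s ha ih =>
      rw [Finset.prod_cons, Finset.prod_cons, Real.sqrt_mul (hf a), ih]

private def ptensor {X Y : Type*} (k : ℕ) (M : Matrix X Y ℝ) :
    Matrix (Fin k → X) (Fin k → Y) ℝ := fun a b => ∏ i, M (a i) (b i)

private lemma ptensor_mul {X Y W : Type*} [Fintype Y] [DecidableEq Y]
    (k : ℕ) (M : Matrix X Y ℝ) (N : Matrix Y W ℝ) :
    ptensor k M * ptensor k N = ptensor k (M * N) := by
  ext a c
  simp only [Matrix.mul_apply, ptensor]
  rw [Fintype.prod_sum (fun i y => M (a i) y * N y (c i))]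
  exact Finset.sum_congr rfl fun b _ => (Finset.prod_mul_distrib).symm

private lemma ptensor_pow {X : Type*} [Fintype X] [DecidableEq X]
    (k : ℕ) (M : Matrix X X ℝ) (n : ℕ) (hn : 1 ≤ n) :
    (ptensor k M) ^ n = ptensor k (M ^ n) := by
  induction n, hn using Nat.le_induction with
  | base => simp [pow_one]
  | succ n hn ih => rw [pow_succ, pow_succ, ih, ptensor_mul]

private lemma ptensor_trace {X : Type*} [Fintype X] [DecidableEq X]
    (k : ℕ) (M : Matrix X X ℝ) :
    Matrix.trace (ptensor k M) = (Matrix.trace M) ^ k := by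
  simp only [Matrix.trace, Matrix.diag, ptensor]
  rw [← Fin.prod_const k (∑ x, M x x), Fintype.prod_sum (fun (_ : Fin k) y => M y y)]

/-- Cycle mutual information tensorizes: `I°_ℓ(p^{⊗k}) = k · I°_ℓ(p)`, where
`p^{⊗k}` is the `k`-fold product distribution on `X^k × Y^k`,
`I°_ℓ(p) = (1/(1-ℓ)) log trace ((z zᵀ)^ℓ)`, and `z` is the entrywise square root of `p`. -/
theorem cycleMutualInformation_tensorize
    {X Y : Type*} [Fintype X] [Fintype Y] [DecidableEq X] [DecidableEq Y]
    (p : X × Y → ℝ) (hp : ∀ a, 0 ≤ p a) (hsum : ∑ a : X × Y, p a = 1)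
    (z : Matrix X Y ℝ) (hz : ∀ i j, z i j = Real.sqrt (p (i, j)))
    (k : ℕ) (hk : 1 ≤ k)
    (zk : Matrix (Fin k → X) (Fin k → Y) ℝ)
    (hzk : ∀ a b, zk a b = Real.sqrt (∏ i, p (a i, b i)))
    (ℓ : ℕ) (hℓ : 2 ≤ ℓ) :
    (1 / (1 - (ℓ : ℝ))) * Real.log (Matrix.trace ((zk * zkᵀ) ^ ℓ))
      = k * ((1 / (1 - (ℓ : ℝ))) * Real.log (Matrix.trace ((z * zᵀ) ^ ℓ))) := by
  have hzk' : zk = ptensor k z := by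
    ext a b
    rw [hzk, sqrt_prod' _ _ (fun i => hp _), ptensor]
    exact Finset.prod_congr rfl fun i _ => (hz (a i) (b i)).symm
  have hzkT : zkᵀ = ptensor k zᵀ := by
    ext b a
    simp [hzk', ptensor, Matrix.transpose_apply]
  have key : Matrix.trace ((zk * zkᵀ) ^ ℓ) = (Matrix.trace ((z * zᵀ) ^ ℓ)) ^ k := by
    rw [hzk'] at hzkT ⊢; rw [hzkT, ptensor_mul, ptensor_pow _ _ _ (by omega), ptensor_trace]
  rw [key, Real.log_pow]
  ring
end

section
/- The vector of squared singular values of z majorizes the marginal distribution p_a: there exists a doubly stochastic matrix D with p_a = D σ², where σ² is the vector of squared singular values of z. -/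
open Matrix Finset

/-- The vector of squared singular values of `z` (the eigenvalues of `z * zᵀ`)
majorizes the marginal `p_a`: there is a doubly stochastic matrix `D` with
`p_a = D • σ²`. -/
theorem marginal_majorized_by_sq_singular_values
    {X Y : Type*} [Fintype X] [Fintype Y] [DecidableEq X]
    (p : X × Y → ℝ) (hp : ∀ a, 0 ≤ p a) (hsum : ∑ a : X × Y, p a = 1)
    (z : Matrix X Y ℝ) (hz : ∀ i j, z i j = Real.sqrt (p (i, j)))
    (hHerm : (z * zᵀ).IsHermitian) :
    ∃ D ∈ doublyStochastic ℝ X,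
      (fun i => ∑ j, p (i, j)) = D.mulVec hHerm.eigenvalues := by
  set U : Matrix X X ℝ := (hHerm.eigenvectorUnitary : Matrix X X ℝ) with hU
  have hUmem : U ∈ Matrix.unitaryGroup X ℝ := hHerm.eigenvectorUnitary.2
  have hUU : U * star U = 1 := (Matrix.mem_unitaryGroup_iff).mp hUmem
  have hUU' : star U * U = 1 := (Matrix.mem_unitaryGroup_iff').mp hUmem
  refine ⟨fun i k => (U i k) ^ 2, ?_, ?_⟩
  · apply mem_doublyStochastic_iff_sum.mpr
    refine ⟨fun i j => sq_nonneg _, fun i => ?_, fun k => ?_⟩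
    · have := congrFun (congrFun hUU i) i
      simpa [Matrix.mul_apply, sq, Matrix.one_apply] using this
    · have := congrFun (congrFun hUU' k) k
      simpa [Matrix.mul_apply, sq, mul_comm] using this
  · funext i
    have hA : (z * zᵀ) i i = ∑ k, (U i k) ^ 2 * hHerm.eigenvalues k := by
      conv_lhs => rw [hHerm.spectral_theorem]
      simp [Matrix.mul_apply, Matrix.diagonal_apply, Finset.sum_mul]
      refine Finset.sum_congr rfl fun k _ => ?_
      simp [hU, Matrix.IsHermitian.eigenvectorUnitary_apply]
      ring
    have hA' : (z * zᵀ) i i = ∑ j, p (i, j) := by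
      simp only [Matrix.mul_apply, Matrix.transpose_apply, hz]
      exact Finset.sum_congr rfl fun j _ => Real.mul_self_sqrt (hp (i, j))
    simp only [Matrix.mulVec, dotProduct]
    rw [← hA, hA']
end

section
/- For integer ℓ ≥ 2, cycle mutual information is bounded by the marginal Rényi entropies: I°_ℓ(p) ≤ min(H_ℓ(p_a), H_ℓ(p_b)). -/
open Matrix Finset

lemma pow_entry_nonneg {n : Type*} [Fintype n] [DecidableEq n] (A : Matrix n n ℝ)
    (hA : ∀ i j, 0 ≤ A i j) (ℓ : ℕ) : ∀ i j, 0 ≤ (A ^ ℓ) i j := by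
  induction ℓ with
  | zero => intro i j; simp [Matrix.one_apply]; positivity
  | succ n ih =>
    intro i j
    rw [pow_succ, Matrix.mul_apply]
    exact Finset.sum_nonneg fun k _ => mul_nonneg (ih i k) (hA k j)

lemma diag_pow_le {n : Type*} [Fintype n] [DecidableEq n] (A : Matrix n n ℝ)
    (hA : ∀ i j, 0 ≤ A i j) (ℓ : ℕ) (i : n) : (A i i) ^ ℓ ≤ (A ^ ℓ) i i := by
  induction ℓ with
  | zero => simp
  | succ m ih =>
    have key : (A ^ (m + 1)) i i = ∑ k, (A ^ m) i k * A k i := by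
      rw [pow_succ, Matrix.mul_apply]
    rw [key]
    calc A i i ^ m * A i i ≤ (A ^ m) i i * A i i :=
          mul_le_mul_of_nonneg_right ih (hA i i)
      _ ≤ ∑ k, (A ^ m) i k * A k i :=
          Finset.single_le_sum (fun k _ => mul_nonneg (pow_entry_nonneg A hA m i k) (hA k i))
            (Finset.mem_univ i)

lemma my_trace_pow_comm {X Y : Type*} [Fintype X] [Fintype Y] [DecidableEq X] [DecidableEq Y]
    (A : Matrix X Y ℝ) (B : Matrix Y X ℝ) (n : ℕ) :
    ((A * B) ^ (n + 1)).trace = ((B * A) ^ (n + 1)).trace := by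
  have h : ∀ m : ℕ, (A * B) ^ m * A = A * (B * A) ^ m := by
    intro m
    induction m with
    | zero => simp
    | succ k ih =>
      rw [pow_succ', Matrix.mul_assoc, ih, pow_succ' (B*A) k, ← Matrix.mul_assoc,
        Matrix.mul_assoc A B A, Matrix.mul_assoc]
  calc ((A * B) ^ (n + 1)).trace = (A * ((B * A) ^ n * B)).trace := by
        rw [pow_succ, ← Matrix.mul_assoc ((A*B)^n) A B, h n, Matrix.mul_assoc]
    _ = (((B * A) ^ n * B) * A).trace := Matrix.trace_mul_comm _ _
    _ = ((B * A) ^ (n + 1)).trace := by rw [Matrix.mul_assoc, ← pow_succ (B*A) n]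

/-- Cycle mutual information is bounded by the marginal Rényi entropies:
`I°_ℓ(p) ≤ min (H_ℓ(p_a)) (H_ℓ(p_b))` for integer `ℓ ≥ 2`. -/
theorem cycleMutualInformation_le_min_renyiEntropy
    {X Y : Type*} [Fintype X] [Fintype Y] [DecidableEq X]
    (p : X × Y → ℝ) (hp : ∀ a, 0 ≤ p a) (hsum : ∑ a : X × Y, p a = 1)
    (z : Matrix X Y ℝ) (hz : ∀ i j, z i j = Real.sqrt (p (i, j)))
    (ℓ : ℕ) (hℓ : 2 ≤ ℓ) :
    (1 / (1 - (ℓ : ℝ))) * Real.log (Matrix.trace ((z * zᵀ) ^ ℓ))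
      ≤ min ((1 / (1 - (ℓ : ℝ))) * Real.log (∑ i, (∑ j, p (i, j)) ^ ℓ))
          ((1 / (1 - (ℓ : ℝ))) * Real.log (∑ j, (∑ i, p (i, j)) ^ ℓ)) := by
  classical
  have hℓR : (2:ℝ) ≤ (ℓ : ℝ) := by exact_mod_cast hℓ
  have hc : (1 / (1 - (ℓ : ℝ))) ≤ 0 :=
    div_nonpos_of_nonneg_of_nonpos (by norm_num) (by linarith)
  -- positive entry of p
  have hex : ∃ a : X × Y, 0 < p a := by
    by_contra hcon
    push_neg at hcon
    have : ∑ a : X × Y, p a ≤ 0 := Finset.sum_nonpos fun a _ => hcon a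
    linarith [hsum]
  obtain ⟨⟨i0, j0⟩, hpos⟩ := hex
  -- matrices
  set A := z * zᵀ with hA
  set B := zᵀ * z with hB
  have hAnn : ∀ i j, 0 ≤ A i j := by
    intro i j
    rw [hA, Matrix.mul_apply]
    refine Finset.sum_nonneg fun k _ => ?_
    rw [Matrix.transpose_apply, hz, hz]
    positivity
  have hBnn : ∀ i j, 0 ≤ B i j := by
    intro i j
    rw [hB, Matrix.mul_apply]
    refine Finset.sum_nonneg fun k _ => ?_
    rw [Matrix.transpose_apply, hz, hz]
    positivity
  have hAdiag : ∀ i, A i i = ∑ j, p (i, j) := by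
    intro i
    rw [hA, Matrix.mul_apply]
    refine Finset.sum_congr rfl fun k _ => ?_
    rw [Matrix.transpose_apply, hz, Real.mul_self_sqrt (hp _)]
  have hBdiag : ∀ j, B j j = ∑ i, p (i, j) := by
    intro j
    rw [hB, Matrix.mul_apply]
    refine Finset.sum_congr rfl fun k _ => ?_
    rw [Matrix.transpose_apply, hz, Real.mul_self_sqrt (hp _)]
  -- trace lower bounds
  have hTa : ∑ i, (∑ j, p (i, j)) ^ ℓ ≤ (A ^ ℓ).trace := by
    rw [Matrix.trace]
    refine Finset.sum_le_sum fun i _ => ?_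
    rw [Matrix.diag_apply, ← hAdiag i]
    exact diag_pow_le A hAnn ℓ i
  have hTb : ∑ j, (∑ i, p (i, j)) ^ ℓ ≤ (B ^ ℓ).trace := by
    rw [Matrix.trace]
    refine Finset.sum_le_sum fun j _ => ?_
    rw [Matrix.diag_apply, ← hBdiag j]
    exact diag_pow_le B hBnn ℓ j
  have htr : (A ^ ℓ).trace = (B ^ ℓ).trace := by
    obtain ⟨m, rfl⟩ : ∃ m, ℓ = m + 1 := ⟨ℓ - 1, by omega⟩
    exact my_trace_pow_comm z zᵀ m
  -- positivity of the marginal sums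
  have hSa : 0 < ∑ i, (∑ j, p (i, j)) ^ ℓ := by
    refine Finset.sum_pos' (fun i _ => pow_nonneg (Finset.sum_nonneg fun j _ => hp _) ℓ)
      ⟨i0, Finset.mem_univ i0, pow_pos ?_ ℓ⟩
    exact lt_of_lt_of_le hpos
      (Finset.single_le_sum (fun j _ => hp (i0, j)) (Finset.mem_univ j0))
  have hSb : 0 < ∑ j, (∑ i, p (i, j)) ^ ℓ := by
    refine Finset.sum_pos' (fun j _ => pow_nonneg (Finset.sum_nonneg fun i _ => hp _) ℓ)
      ⟨j0, Finset.mem_univ j0, pow_pos ?_ ℓ⟩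
    exact lt_of_lt_of_le hpos
      (Finset.single_le_sum (fun i _ => hp (i, j0)) (Finset.mem_univ i0))
  refine le_min ?_ ?_
  · exact mul_le_mul_of_nonpos_left (Real.log_le_log hSa hTa) hc
  · exact mul_le_mul_of_nonpos_left (Real.log_le_log hSb (htr ▸ hTb)) hc
end

section
/- Conversely, if I°_2(p) = 0 then p is a product distribution: trace((z zᵀ)²) = 1 together with trace(z zᵀ) = 1 forces z to be rank one, hence p(i,j) = p_a(i) p_b(j). -/
open Matrix Finset

lemma cs_eq_case {ι : Type*} [Fintype ι] (a b : ι → ℝ)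
    (h : (∑ j, a j * b j) ^ 2 = (∑ j, a j ^ 2) * (∑ j, b j ^ 2)) :
    ∀ j k, a j * b k = a k * b j := by
  have key : ∑ j, ∑ k, (a j * b k - a k * b j) ^ 2 = 0 := by
    have expand : ∀ j k : ι, (a j * b k - a k * b j) ^ 2 =
        a j ^ 2 * b k ^ 2 - 2 * ((a j * b j) * (a k * b k)) + a k ^ 2 * b j ^ 2 := by
      intro j k; ring
    calc ∑ j, ∑ k, (a j * b k - a k * b j) ^ 2
        = ∑ j, ∑ k, (a j ^ 2 * b k ^ 2 - 2 * ((a j * b j) * (a k * b k)) + a k ^ 2 * b j ^ 2) := by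
          simp_rw [expand]
      _ = (∑ j, a j ^ 2) * (∑ k, b k ^ 2) - 2 * (∑ j, a j * b j) ^ 2
          + (∑ k, a k ^ 2) * (∑ j, b j ^ 2) := by
          simp_rw [Finset.sum_add_distrib, Finset.sum_sub_distrib, ← Finset.mul_sum,
            ← Finset.sum_mul, ← Finset.mul_sum]
          ring
      _ = 0 := by rw [h]; ring
  intro j k
  have h1 : ∀ j ∈ (univ : Finset ι), ∑ k, (a j * b k - a k * b j) ^ 2 = 0 := by
    rw [← Finset.sum_eq_zero_iff_of_nonneg (fun j _ => Finset.sum_nonneg fun k _ => sq_nonneg _)]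
    exact key
  have h2 := (Finset.sum_eq_zero_iff_of_nonneg (fun k _ => sq_nonneg _)).mp
    (h1 j (Finset.mem_univ j)) k (Finset.mem_univ k)
  have := pow_eq_zero_iff (n := 2) (by norm_num) |>.mp h2
  linarith

/-- If `I°_2(p) = 0` then `p` is a product distribution:
`p (i,j) = p_a i * p_b j` where `p_a`, `p_b` are the marginals. -/
theorem cycleMI_two_eq_zero_implies_product
    {X Y : Type*} [Fintype X] [Fintype Y] [DecidableEq X]
    (p : X × Y → ℝ) (hp : ∀ a, 0 ≤ p a) (hsum : ∑ a : X × Y, p a = 1)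
    (z : Matrix X Y ℝ) (hz : ∀ i j, z i j = Real.sqrt (p (i, j)))
    (hI : (1 / (1 - (2 : ℝ))) * Real.log (Matrix.trace ((z * zᵀ) ^ 2)) = 0) :
    ∀ i j, p (i, j) = (∑ j', p (i, j')) * (∑ i', p (i', j)) := by
  -- basic facts
  have hzsq : ∀ i j, z i j ^ 2 = p (i, j) := fun i j => by
    rw [hz]; exact Real.sq_sqrt (hp _)
  set M := z * zᵀ with hM
  have hMapp : ∀ i i', M i i' = ∑ j, z i j * z i' j := by
    intro i i'; simp [hM, Matrix.mul_apply, Matrix.transpose_apply]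
  have hMsymm : ∀ i i', M i i' = M i' i := by
    intro i i'; simp_rw [hMapp]; exact Finset.sum_congr rfl fun j _ => mul_comm _ _
  have htr1 : Matrix.trace M = 1 := by
    rw [Matrix.trace]
    simp_rw [Matrix.diag, hMapp]
    calc ∑ i, ∑ j, z i j * z i j = ∑ i, ∑ j, p (i, j) := by
          refine Finset.sum_congr rfl fun i _ => Finset.sum_congr rfl fun j _ => ?_
          rw [← hzsq i j]; ring
      _ = 1 := by rw [← Fintype.sum_prod_type]; exact hsum
  have htr2 : Matrix.trace (M ^ 2) = ∑ i, ∑ i', M i i' ^ 2 := by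
    rw [sq, Matrix.trace]
    simp_rw [Matrix.diag, Matrix.mul_apply]
    refine Finset.sum_congr rfl fun i _ => Finset.sum_congr rfl fun i' _ => ?_
    rw [sq, ← hMsymm]
  -- trace (M^2) = 1
  have hlog : Real.log (Matrix.trace (M ^ 2)) = 0 := by
    have : (1 / (1 - (2:ℝ))) ≠ 0 := by norm_num
    exact (mul_eq_zero.mp hI).resolve_left this
  have hne0 : Matrix.trace (M ^ 2) ≠ 0 := by
    rw [htr2]
    intro h0
    have h1 : ∀ i ∈ (univ : Finset X), ∑ i', M i i' ^ 2 = 0 := by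
      refine (Finset.sum_eq_zero_iff_of_nonneg (fun i _ => Finset.sum_nonneg fun i' _ => sq_nonneg _)).mp ?_
      exact h0
    have hdiag : ∀ i : X, M i i = 0 := by
      intro i
      have := (Finset.sum_eq_zero_iff_of_nonneg (fun i' _ => sq_nonneg _)).mp
        (h1 i (Finset.mem_univ i)) i (Finset.mem_univ i)
      exact pow_eq_zero_iff (n := 2) (by norm_num) |>.mp this
    have : Matrix.trace M = 0 := by
      rw [Matrix.trace]; simp [Matrix.diag, hdiag]
    rw [htr1] at this; norm_num at this
  have htr2nonneg : 0 ≤ Matrix.trace (M ^ 2) := by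
    rw [htr2]; exact Finset.sum_nonneg fun i _ => Finset.sum_nonneg fun i' _ => sq_nonneg _
  have htrM2 : Matrix.trace (M ^ 2) = 1 := by
    rcases Real.log_eq_zero.mp hlog with h | h | h
    · exact absurd h hne0
    · exact h
    · exfalso; rw [h] at htr2nonneg; norm_num at htr2nonneg
  -- Cauchy-Schwarz equality
  have hS : ∀ i i', M i i' ^ 2 ≤ (M i i) * (M i' i') := by
    intro i i'
    rw [hMapp, hMapp, hMapp]
    have := Finset.sum_mul_sq_le_sq_mul_sq (univ : Finset Y) (z i) (z i')
    calc (∑ j, z i j * z i' j) ^ 2 ≤ (∑ j, z i j ^ 2) * ∑ j, z i' j ^ 2 := this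
      _ = (∑ j, z i j * z i j) * ∑ j, z i' j * z i' j := by simp_rw [sq]
  have hsum_eq : ∑ i, ∑ i', M i i' ^ 2 = ∑ i, ∑ i', (M i i) * (M i' i') := by
    rw [← htr2, htrM2]
    simp_rw [← Finset.mul_sum]
    rw [← Finset.sum_mul]
    have : ∑ i, M i i = 1 := htr1
    rw [this]
    ring
  have hcs_eq : ∀ i i', M i i' ^ 2 = (M i i) * (M i' i') := by
    have houter : ∀ i ∈ (univ : Finset X),
        ∑ i', M i i' ^ 2 = ∑ i', (M i i) * (M i' i') := by
      apply (Finset.sum_eq_sum_iff_of_le (fun i _ =>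
        Finset.sum_le_sum fun i' _ => hS i i')).mp hsum_eq
    intro i i'
    exact (Finset.sum_eq_sum_iff_of_le (fun i' _ => hS i i')).mp
      (houter i (Finset.mem_univ i)) i' (Finset.mem_univ i')
  -- deduce z i j * z i' k = z i k * z i' j
  have hprop : ∀ i i' j k, z i j * z i' k = z i k * z i' j := by
    intro i i' j k
    apply cs_eq_case (z i) (z i')
    have := hcs_eq i i'
    rw [hMapp, hMapp, hMapp] at this
    simpa [sq] using this
  -- deduce p identity
  have hpmul : ∀ (i i' : X) (j k : Y), p (i, j) * p (i', k) = p (i, k) * p (i', j) := by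
    intro i i' j k
    have h := hprop i i' j k
    have := congrArg (· ^ 2) h
    simp only [mul_pow, hzsq] at this
    exact this
  intro i j
  calc p (i, j) = p (i, j) * ∑ a : X × Y, p a := by rw [hsum, mul_one]
    _ = ∑ i', ∑ k, p (i, j) * p (i', k) := by
        rw [Fintype.sum_prod_type, Finset.mul_sum]
        refine Finset.sum_congr rfl fun i' _ => Finset.mul_sum _ _ _
    _ = ∑ i', ∑ k, p (i, k) * p (i', j) := by
        refine Finset.sum_congr rfl fun i' _ => Finset.sum_congr rfl fun k _ => hpmul i i' j k
    _ = (∑ j', p (i, j')) * (∑ i', p (i', j)) := by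
        rw [Finset.sum_comm, Finset.sum_mul]
        refine Finset.sum_congr rfl fun k _ => ?_
        rw [Finset.mul_sum]
end

section
/- The generating function B is symmetric: B_{m₁,m₂}(x,y) = B_{m₂,m₁}(x,y), for any two bijections m₁, m₂ between U_a and U_b. -/
open Matrix Finset

/-- The generating function `B` is symmetric: `B_{m₁,m₂}(x,y) = B_{m₂,m₁}(x,y)`. -/
theorem generating_function_symm
    {Ua Ub Xa Xb : Type*} [Fintype Ua] [Fintype Ub] [Fintype Xa] [Fintype Xb]
    [DecidableEq Ua] [DecidableEq Ub]
    (x y : Matrix Xa Xb ℝ) (m₁ m₂ : Ua ≃ Ub) :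
    (∑ fa : Ua → Xa, ∑ fb : Ub → Xb,
        (∏ u : Ua, x (fa u) (fb (m₁ u))) * (∏ u : Ua, y (fa u) (fb (m₂ u))))
      = ∑ fa : Ua → Xa, ∑ fb : Ub → Xb,
          (∏ u : Ua, x (fa u) (fb (m₂ u))) * (∏ u : Ua, y (fa u) (fb (m₁ u))) := by
  classical
  set c : Equiv.Perm Ua := m₂.trans m₁.symm with hc
  have hconj : IsConj c c⁻¹ := by
    rw [Equiv.Perm.isConj_iff_cycleType_eq, Equiv.Perm.cycleType_inv]
  obtain ⟨σ, hσ⟩ := isConj_iff.mp hconj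
  have hσ' : σ * c = c⁻¹ * σ := by
    rwa [mul_inv_eq_iff_eq_mul] at hσ
  have hσu : ∀ u : Ua, σ (c u) = c⁻¹ (σ u) := fun u => by
    have := congrFun (congrArg (fun e : Equiv.Perm Ua => (e : Ua → Ua)) hσ') u
    simpa using this
  set τ : Ub ≃ Ub := (m₁.symm.trans σ).trans m₂ with hτ
  have hτ1 : ∀ u : Ua, τ (m₁ u) = m₂ (σ u) := by
    intro u; simp [hτ]
  have hτ2 : ∀ u : Ua, τ (m₂ u) = m₁ (σ u) := by
    intro u
    have h1 : τ (m₂ u) = m₂ (σ (c u)) := by simp [hτ, hc]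
    have h2 : c⁻¹ (σ u) = m₂.symm (m₁ (σ u)) := by
      have : c⁻¹ = m₁.trans m₂.symm := rfl
      rw [this]; rfl
    rw [h1, hσu u, h2]; simp
  refine Fintype.sum_equiv (Equiv.arrowCongr σ.symm (Equiv.refl Xa)) _ _ (fun fa => ?_)
  refine Fintype.sum_equiv (Equiv.arrowCongr τ.symm (Equiv.refl Xb)) _ _ (fun fb => ?_)
  have ea : ∀ u, (Equiv.arrowCongr σ.symm (Equiv.refl Xa) fa) u = fa (σ u) := fun u => by
    simp [Equiv.arrowCongr]
  have eb : ∀ v, (Equiv.arrowCongr τ.symm (Equiv.refl Xb) fb) v = fb (τ v) := fun v => by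
    simp [Equiv.arrowCongr]
  simp only [ea, eb, hτ1, hτ2]
  rw [Equiv.prod_comp σ (fun u => x (fa u) (fb (m₁ u))),
      Equiv.prod_comp σ (fun u => y (fa u) (fb (m₂ u)))]
end

section
/- For any two bijections m₁, m₂ with d = n − |m₁ ∩ m₂|, B_{m₁,m₂}(z,z) ≤ (trace((z zᵀ)²))^{d/2}, where z is the entrywise square root of the joint distribution p. -/
open Matrix Finset


section Split
variable {β X : Type*} [Fintype β] [DecidableEq β] [Fintype X]

/-- If `u` depends only on values in `s` and `v` only on values outside `s`, then the
sums over all functions factor. -/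
lemma sum_mul_sum_split (s : Finset β) (u v : (β → X) → ℝ)
    (hu : ∀ f g : β → X, (∀ b ∈ s, f b = g b) → u f = u g)
    (hv : ∀ f g : β → X, (∀ b ∉ s, f b = g b) → v f = v g) :
    (∑ f : β → X, u f) * (∑ f : β → X, v f)
      = (Fintype.card X : ℝ) ^ (Fintype.card β) * ∑ f : β → X, u f * v f := by
  classical
  have hinv : Function.Involutive
      (fun p : (β → X) × (β → X) => (s.piecewise p.1 p.2, s.piecewise p.2 p.1)) := by
    intro p
    ext b
    · by_cases hb : b ∈ s <;> simp [Finset.piecewise, hb]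
    · by_cases hb : b ∈ s <;> simp [Finset.piecewise, hb]
  have key : ∀ f g : β → X, u f * v g = u (s.piecewise f g) * v (s.piecewise f g) := by
    intro f g
    rw [hu f (s.piecewise f g) (fun b hb => (s.piecewise_eq_of_mem _ _ hb).symm),
      hv g (s.piecewise f g) (fun b hb => (s.piecewise_eq_of_notMem _ _ hb).symm)]
  calc (∑ f : β → X, u f) * (∑ f : β → X, v f)
      = ∑ p : (β → X) × (β → X), u p.1 * v p.2 := by
        rw [Fintype.sum_prod_type]; rw [Finset.sum_mul_sum]
    _ = ∑ p : (β → X) × (β → X), u ((hinv.toPerm _) p).1 * v ((hinv.toPerm _) p).1 := by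
        apply Fintype.sum_congr; intro p
        simpa using key p.1 p.2
    _ = ∑ p : (β → X) × (β → X), u p.1 * v p.1 :=
        Equiv.sum_comp (hinv.toPerm _) (fun p => u p.1 * v p.1)
    _ = (Fintype.card X : ℝ) ^ (Fintype.card β) * ∑ f : β → X, u f * v f := by
        rw [Fintype.sum_prod_type]
        simp only [Finset.sum_const, Finset.card_univ, nsmul_eq_mul, Fintype.card_fun]
        push_cast
        rw [← Finset.mul_sum]

/-- Sum over all functions of a product over a subset. -/
lemma sum_pi_prod (s : Finset β) (h : β → X → ℝ) :
    ∑ f : β → X, ∏ b ∈ s, h b (f b)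
      = (Fintype.card X : ℝ) ^ (sᶜ.card) * ∏ b ∈ s, ∑ x : X, h b x := by
  classical
  have h1 : ∀ f : β → X, ∏ b ∈ s, h b (f b)
      = ∏ b : β, (if b ∈ s then h b (f b) else 1) := by
    intro f
    rw [Finset.prod_ite_mem univ s (fun b => h b (f b))]
    simp [Finset.univ_inter]
  simp_rw [h1]
  rw [← Fintype.piFinset_univ, ← Finset.prod_univ_sum (fun _ => (univ : Finset X)) (fun b y => if b ∈ s then h b y else 1)]
  rw [← Finset.prod_mul_prod_compl s]
  have h2 : ∏ b ∈ s, ∑ x : X, (if b ∈ s then h b x else 1) = ∏ b ∈ s, ∑ x : X, h b x := by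
    apply Finset.prod_congr rfl; intro b hb; simp [hb]
  have h3 : ∏ b ∈ sᶜ, ∑ x : X, (if b ∈ s then h b x else 1)
      = (Fintype.card X : ℝ) ^ (sᶜ.card) := by
    rw [Finset.prod_congr rfl (fun b hb => ?_), Finset.prod_const]
    have : b ∉ s := by simpa using hb
    simp [this]
  rw [h2, h3]; ring

end Split

section Scalar
variable {β K : Type*} [Fintype β] [DecidableEq β] [Fintype K] [DecidableEq K] [Nonempty K]

/-- Key reduction: if `σ` maps `s` into `s` and fixes the complement, then the full sum
with products restricted to `s` equals `N ^ |sᶜ|` times the full-product sum. -/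
lemma helper1 (lam : K → ℝ) (hsum1 : ∑ k, lam k = 1) (σ : Equiv.Perm β)
    (s : Finset β) (hs : ∀ b ∈ s, σ b ∈ s) (hfix : ∀ b ∉ s, σ b = b) :
    (∑ g : β → K, ∏ b ∈ s, (lam (g b) * if g (σ b) = g b then 1 else 0))
      = (Fintype.card K : ℝ) ^ (sᶜ.card)
        * ∑ g : β → K, ∏ b : β, (lam (g b) * if g (σ b) = g b then 1 else 0) := by
  classical
  set N : ℝ := (Fintype.card K : ℝ) with hN
  have hN0 : 0 < N := by
    simp only [hN]
    exact_mod_cast Fintype.card_pos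
  set u : (β → K) → ℝ := fun g => ∏ b ∈ s, (lam (g b) * if g (σ b) = g b then 1 else 0)
    with hu_def
  set v : (β → K) → ℝ := fun g => ∏ b ∈ sᶜ, lam (g b) with hv_def
  have hu : ∀ f g : β → K, (∀ b ∈ s, f b = g b) → u f = u g := by
    intro f g hfg
    apply Finset.prod_congr rfl
    intro b hb
    rw [hfg b hb, hfg (σ b) (hs b hb)]
  have hv : ∀ f g : β → K, (∀ b ∉ s, f b = g b) → v f = v g := by
    intro f g hfg
    apply Finset.prod_congr rfl
    intro b hb
    rw [hfg b (by simpa using hb)]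
  have hsplit := sum_mul_sum_split s u v hu hv
  have hvsum : (∑ g : β → K, v g) = N ^ s.card := by
    have := sum_pi_prod sᶜ (fun _ x => lam x)
    simp only [hv_def, this, compl_compl, hsum1, Finset.prod_const_one, mul_one, hN]
  have huv : ∀ g : β → K, u g * v g
      = ∏ b : β, (lam (g b) * if g (σ b) = g b then 1 else 0) := by
    intro g
    rw [← Finset.prod_mul_prod_compl s]
    congr 1
    apply Finset.prod_congr rfl
    intro b hb
    have hb' : b ∉ s := by simpa using hb
    rw [hfix b hb', if_pos rfl, mul_one]
  simp only [huv] at hsplit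
  rw [hvsum] at hsplit
  have hcard : s.card + sᶜ.card = Fintype.card β := Finset.card_add_card_compl s
  have hNc : (N : ℝ) ^ (Fintype.card β) = N ^ s.card * N ^ sᶜ.card := by
    rw [← pow_add, hcard]
  rw [hNc] at hsplit
  apply mul_right_cancel₀ (pow_ne_zero s.card hN0.ne')
  rw [hsplit]; ring
end Scalar

section Scalar2
variable {β K : Type*} [Fintype β] [DecidableEq β] [Fintype K] [DecidableEq K] [Nonempty K]

lemma cycle_const_iff (lam : K → ℝ) (σ : Equiv.Perm β) (hσ : σ.IsCycle)
    (g : β → K) {b₀ : β} (hb₀ : b₀ ∈ σ.support) :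
    (∀ b ∈ σ.support, g (σ b) = g b) ↔ (∀ b ∈ σ.support, g b = g b₀) := by
  constructor
  · intro H b hb
    obtain ⟨i, hi⟩ := hσ.exists_pow_eq (Equiv.Perm.mem_support.mp hb₀)
      (Equiv.Perm.mem_support.mp hb)
    have key : ∀ i : ℕ, g ((σ ^ i) b₀) = g b₀ := by
      intro i
      induction i with
      | zero => simp
      | succ n ih =>
        have hmem : (σ ^ n) b₀ ∈ σ.support := Equiv.Perm.pow_apply_mem_support.mpr hb₀
        rw [pow_succ' σ n, Equiv.Perm.mul_apply, H _ hmem, ih]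
    rw [← hi, key]
  · intro H b hb
    rw [H (σ b) (Equiv.Perm.apply_mem_support.mpr hb), H b hb]

lemma lambda_sum_le (lam : K → ℝ) (hlam : ∀ k, 0 ≤ lam k) (hsum1 : ∑ k, lam k = 1)
    (σ : Equiv.Perm β) :
    (∑ g : β → K, ∏ b : β, (lam (g b) * if g (σ b) = g b then 1 else 0))
      ≤ (∑ k, (lam k) ^ 2) ^ ((σ.support.card : ℝ) / 2) := by
  classical
  set T : ℝ := ∑ k, (lam k) ^ 2 with hT_def
  have hT0 : 0 < T := by
    by_contra h
    push_neg at h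
    have hT0' : T = 0 := le_antisymm h (Finset.sum_nonneg fun k _ => sq_nonneg _)
    have : ∀ k ∈ (univ : Finset K), (lam k) ^ 2 = 0 :=
      (Finset.sum_eq_zero_iff_of_nonneg (fun k _ => sq_nonneg _)).mp hT0'
    have : ∑ k, lam k = 0 := Finset.sum_eq_zero fun k hk => by
      exact pow_eq_zero_iff two_ne_zero |>.mp (this k hk)
    rw [hsum1] at this; norm_num at this
  set N : ℝ := (Fintype.card K : ℝ) with hN
  have hN0 : 0 < N := by
    simp only [hN]; exact_mod_cast Fintype.card_pos
  induction σ using Equiv.Perm.cycle_induction_on with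
  | base_one =>
    simp only [Equiv.Perm.support_one, Finset.card_empty, Nat.cast_zero, zero_div,
      Real.rpow_zero, Equiv.Perm.one_apply, eq_self_iff_true, if_true, mul_one]
    rw [← Fintype.piFinset_univ,
      ← Finset.prod_univ_sum (fun _ => (univ : Finset K)) (fun _ y => lam y)]
    simp [hsum1]
  | base_cycles σ hσ =>
    have h2 : 2 ≤ σ.support.card := hσ.two_le_card_support
    obtain ⟨b₀, hb₀⟩ := Finset.card_pos.mp (lt_of_lt_of_le two_pos h2)
    set s := σ.support with hs_def
    have hmap : ∀ b ∈ s, σ b ∈ s := fun b hb => Equiv.Perm.apply_mem_support.mpr hb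
    have hfix : ∀ b ∉ s, σ b = b := fun b hb => Equiv.Perm.notMem_support.mp hb
    have h1 := helper1 lam hsum1 σ s hmap hfix
    have hLHS : (∑ g : β → K, ∏ b ∈ s, (lam (g b) * if g (σ b) = g b then 1 else 0))
        = N ^ (sᶜ.card) * ∑ c : K, lam c ^ s.card := by
      have step1 : ∀ g : β → K, (∏ b ∈ s, (lam (g b) * if g (σ b) = g b then 1 else 0))
          = ∑ c : K, ∏ b ∈ s, (lam (g b) * if g b = c then 1 else 0) := by
        intro g
        rw [Finset.prod_mul_distrib, Finset.prod_boole]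
        have hiff : (∀ b ∈ s, g (σ b) = g b) ↔ (∀ b ∈ s, g b = g b₀) :=
          cycle_const_iff lam σ hσ g hb₀
        simp only [hiff]
        have step3 : (if (∀ b ∈ s, g b = g b₀) then (1:ℝ) else 0)
            = ∑ c : K, if (∀ b ∈ s, g b = c) then (1:ℝ) else 0 := by
          by_cases hP : ∀ b ∈ s, g b = g b₀
          · rw [if_pos hP]
            have hc : ∀ c : K, (∀ b ∈ s, g b = c) ↔ c = g b₀ := by
              intro c
              constructor
              · intro h; rw [← h b₀ hb₀]
              · rintro rfl; exact hP
            rw [Finset.sum_congr rfl (fun c _ => if_congr (hc c) rfl rfl)]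
            simp
          · rw [if_neg hP]
            symm
            apply Finset.sum_eq_zero
            intro c _
            rw [if_neg]
            intro h
            exact hP (fun b hb => by rw [h b hb, ← h b₀ hb₀])
        rw [step3, Finset.mul_sum]
        apply Finset.sum_congr rfl
        intro c _
        symm
        rw [Finset.prod_mul_distrib, Finset.prod_boole]
        congr 1
        by_cases h : ∀ b ∈ s, g b = c <;> simp [h]
      simp_rw [step1]
      rw [Finset.sum_comm]
      have step5 : ∀ c : K, (∑ g : β → K, ∏ b ∈ s, (lam (g b) * if g b = c then 1 else 0))
          = N ^ sᶜ.card * lam c ^ s.card := by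
        intro c
        rw [sum_pi_prod s (fun b x => lam x * if x = c then 1 else 0)]
        have hx : ∀ b ∈ s, (∑ x : K, lam x * if x = c then (1:ℝ) else 0) = lam c := by
          intro b _
          simp [mul_ite, mul_one, mul_zero, Finset.sum_ite_eq']
        rw [Finset.prod_congr rfl hx, Finset.prod_const]
      simp_rw [step5]
      rw [← Finset.mul_sum]
    rw [hLHS] at h1
    have hΛ : (∑ g : β → K, ∏ b : β, (lam (g b) * if g (σ b) = g b then 1 else 0))
        = ∑ c : K, lam c ^ s.card :=
      (mul_left_cancel₀ (pow_ne_zero sᶜ.card hN0.ne') h1).symm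
    rw [hΛ]
    set k := s.card with hk_def
    have hr : ∀ c, lam c ≤ Real.sqrt T := by
      intro c
      rw [← Real.sqrt_sq (hlam c)]
      apply Real.sqrt_le_sqrt
      exact Finset.single_le_sum (fun j _ => sq_nonneg (lam j)) (mem_univ c)
    have hbound : ∑ c, lam c ^ k ≤ T * (Real.sqrt T) ^ (k - 2) := by
      calc ∑ c, lam c ^ k = ∑ c, lam c ^ 2 * lam c ^ (k - 2) := by
            apply Finset.sum_congr rfl
            intro c _
            rw [← pow_add]
            congr 1
            omega
        _ ≤ ∑ c, lam c ^ 2 * (Real.sqrt T) ^ (k - 2) := by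
            apply Finset.sum_le_sum
            intro c _
            exact mul_le_mul_of_nonneg_left
              (pow_le_pow_left₀ (hlam c) (hr c) _) (sq_nonneg _)
        _ = T * (Real.sqrt T) ^ (k - 2) := by rw [← Finset.sum_mul]
    refine le_trans hbound (le_of_eq ?_)
    have hc : ((k - 2 : ℕ) : ℝ) = (k : ℝ) - 2 := by
      have := Nat.cast_sub h2 (R := ℝ)
      simpa using this
    rw [Real.sqrt_eq_rpow, ← Real.rpow_natCast (T ^ ((1:ℝ)/2)) (k - 2),
      ← Real.rpow_mul hT0.le, hc]
    nth_rewrite 1 [← Real.rpow_one T]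
    rw [← Real.rpow_add hT0]
    congr 1
    ring
  | induction_disjoint σ τ hdisj hσ ih1 ih2 =>
    have hnn : ∀ (ρ : Equiv.Perm β),
        0 ≤ ∑ g : β → K, ∏ b : β, (lam (g b) * if g (ρ b) = g b then 1 else 0) := by
      intro ρ
      apply Finset.sum_nonneg
      intro g _
      apply Finset.prod_nonneg
      intro b _
      apply mul_nonneg (hlam _)
      split_ifs <;> norm_num
    set s := σ.support with hs_def
    have hτfix : ∀ b ∈ s, τ b = b := by
      intro b hb
      rcases hdisj b with h | h
      · exact absurd h (Equiv.Perm.mem_support.mp hb)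
      · exact h
    have hστ1 : ∀ b ∈ s, (σ * τ) b = σ b := by
      intro b hb
      rw [Equiv.Perm.mul_apply, hτfix b hb]
    have hτmem : ∀ b, b ∉ s → τ b ∉ s := by
      intro b hb hmem
      rcases hdisj (τ b) with h | h
      · exact (Equiv.Perm.mem_support.mp hmem) h
      · have hfix : τ b = b := τ.injective h
        rw [hfix] at hmem
        exact hb hmem
    have hστ2 : ∀ b, b ∉ s → (σ * τ) b = τ b := by
      intro b hb
      rw [Equiv.Perm.mul_apply, Equiv.Perm.notMem_support.mp (hτmem b hb)]
    set u : (β → K) → ℝ := fun g => ∏ b ∈ s, (lam (g b) * if g (σ b) = g b then 1 else 0)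
      with hu_def
    set v : (β → K) → ℝ := fun g => ∏ b ∈ sᶜ, (lam (g b) * if g (τ b) = g b then 1 else 0)
      with hv_def
    have huv : ∀ g : β → K,
        (∏ b : β, (lam (g b) * if g ((σ * τ) b) = g b then 1 else 0)) = u g * v g := by
      intro g
      rw [← Finset.prod_mul_prod_compl s]
      congr 1
      · exact Finset.prod_congr rfl fun b hb => by rw [hστ1 b hb]
      · exact Finset.prod_congr rfl fun b hb => by rw [hστ2 b (by simpa using hb)]
    have hu : ∀ f g : β → K, (∀ b ∈ s, f b = g b) → u f = u g := by
      intro f g hfg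
      apply Finset.prod_congr rfl
      intro b hb
      rw [hfg b hb, hfg (σ b) (Equiv.Perm.apply_mem_support.mpr hb)]
    have hv : ∀ f g : β → K, (∀ b ∉ s, f b = g b) → v f = v g := by
      intro f g hfg
      apply Finset.prod_congr rfl
      intro b hb
      have hb' : b ∉ s := by simpa using hb
      rw [hfg b hb', hfg (τ b) (hτmem b hb')]
    have hsplit := sum_mul_sum_split s u v hu hv
    have h1 := helper1 lam hsum1 σ s (fun b hb => Equiv.Perm.apply_mem_support.mpr hb)
      (fun b hb => Equiv.Perm.notMem_support.mp hb)
    have h2 := helper1 lam hsum1 τ sᶜ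
      (fun b hb => by simpa using hτmem b (by simpa using hb))
      (fun b hb => hτfix b (by simpa using hb))
    rw [compl_compl] at h2
    simp_rw [← huv] at hsplit
    rw [h1, h2] at hsplit
    have hΛeq : (∑ g : β → K, ∏ b : β, (lam (g b) * if g ((σ * τ) b) = g b then 1 else 0))
        = (∑ g : β → K, ∏ b : β, (lam (g b) * if g (σ b) = g b then 1 else 0))
          * (∑ g : β → K, ∏ b : β, (lam (g b) * if g (τ b) = g b then 1 else 0)) := by
      have hcard : sᶜ.card + s.card = Fintype.card β := Finset.card_compl_add_card s
      apply mul_left_cancel₀ (pow_ne_zero (Fintype.card β) hN0.ne')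
      rw [← hsplit, ← hcard, pow_add]
      ring
    rw [hΛeq, hdisj.card_support_mul]
    calc (∑ g : β → K, ∏ b : β, (lam (g b) * if g (σ b) = g b then 1 else 0))
          * (∑ g : β → K, ∏ b : β, (lam (g b) * if g (τ b) = g b then 1 else 0))
        ≤ T ^ ((σ.support.card : ℝ) / 2) * T ^ ((τ.support.card : ℝ) / 2) :=
          mul_le_mul ih1 ih2 (hnn τ) (Real.rpow_nonneg hT0.le _)
      _ = T ^ (((σ.support.card + τ.support.card : ℕ) : ℝ) / 2) := by
          rw [← Real.rpow_add hT0]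
          congr 1
          push_cast
          ring
end Scalar2

section Eigen
variable {X : Type*} [Fintype X] [DecidableEq X]

lemma exists_eigen (A : Matrix X X ℝ) (hA : A.PosSemidef) :
    ∃ (e : X → X → ℝ) (lam : X → ℝ), (∀ k, 0 ≤ lam k)
      ∧ (∀ x y, A x y = ∑ k, e k x * e k y * lam k)
      ∧ (∀ k l, (∑ x, e k x * e l x) = if k = l then (1:ℝ) else 0)
      ∧ Matrix.trace A = ∑ k, lam k
      ∧ Matrix.trace (A * A) = ∑ k, (lam k) ^ 2 := by
  classical
  have hH : A.IsHermitian := hA.1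
  set U : Matrix X X ℝ := (Matrix.IsHermitian.eigenvectorUnitary hH : Matrix X X ℝ) with hU
  set lam : X → ℝ := hH.eigenvalues with hlam
  set D : Matrix X X ℝ := Matrix.diagonal lam with hD
  have hst : A = U * D * star U := by
    have h := hH.spectral_theorem
    simpa [RCLike.ofReal_real_eq_id, Function.comp_def] using h
  have huni : star U * U = 1 :=
    Matrix.mem_unitaryGroup_iff'.mp (Matrix.IsHermitian.eigenvectorUnitary hH).2
  refine ⟨fun k x => U x k, lam, fun k => hA.eigenvalues_nonneg k, ?_, ?_, ?_, ?_⟩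
  · intro x y
    rw [hst]
    rw [Matrix.mul_apply]
    apply Finset.sum_congr rfl
    intro k _
    rw [Matrix.mul_diagonal, Matrix.star_apply]
    simp [mul_comm, mul_assoc, mul_left_comm]
  · intro k l
    have h2 : (star U * U) k l = (1 : Matrix X X ℝ) k l := by rw [huni]
    rw [Matrix.mul_apply, Matrix.one_apply] at h2
    rw [← h2]
    apply Finset.sum_congr rfl
    intro x _
    rw [Matrix.star_apply]
    simp [mul_comm]
  · rw [hst, Matrix.trace_mul_comm (U * D) (star U), ← Matrix.mul_assoc, huni, Matrix.one_mul,
      Matrix.trace_diagonal]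
  · have hAA : A * A = U * (D * D) * star U := by
      rw [hst]
      calc U * D * star U * (U * D * star U) = U * D * (star U * U) * D * star U := by
            simp only [Matrix.mul_assoc]
        _ = U * (D * D) * star U := by rw [huni]; simp only [Matrix.mul_one, Matrix.mul_assoc]
    rw [hAA, Matrix.trace_mul_comm (U * (D * D)) (star U), ← Matrix.mul_assoc, huni,
      Matrix.one_mul]
    rw [hD, Matrix.diagonal_mul_diagonal, Matrix.trace_diagonal]
    apply Finset.sum_congr rfl
    intro k _
    ring

end Eigen

section Expand
variable {β X : Type*} [Fintype β] [DecidableEq β] [Fintype X] [DecidableEq X]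

lemma sum_prod_eq_lambda (A : Matrix X X ℝ) (e : X → X → ℝ) (lam : X → ℝ)
    (hA : ∀ x y, A x y = ∑ k, e k x * e k y * lam k)
    (horth : ∀ k l, (∑ x, e k x * e l x) = if k = l then (1:ℝ) else 0)
    (σ : Equiv.Perm β) :
    ∑ f : β → X, ∏ b : β, A (f b) (f (σ b))
      = ∑ g : β → X, ∏ b : β, (lam (g b) * if g (σ b) = g b then 1 else 0) := by
  classical
  have step1 : ∀ f : β → X, ∏ b : β, A (f b) (f (σ b))
      = ∑ g : β → X, ∏ b : β, (e (g b) (f b) * e (g b) (f (σ b)) * lam (g b)) := by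
    intro f
    simp_rw [hA]
    rw [Finset.prod_univ_sum (fun _ => (univ : Finset X))
      (fun b k => e k (f b) * e k (f (σ b)) * lam k), Fintype.piFinset_univ]
  simp_rw [step1]
  rw [Finset.sum_comm]
  apply Finset.sum_congr rfl
  intro g _
  calc ∑ f : β → X, ∏ b : β, (e (g b) (f b) * e (g b) (f (σ b)) * lam (g b))
      = ∑ f : β → X, (∏ b : β, lam (g b))
          * ∏ b : β, (e (g b) (f b) * e (g (σ⁻¹ b)) (f b)) := by
        apply Finset.sum_congr rfl
        intro f _
        rw [Finset.prod_mul_distrib, Finset.prod_mul_distrib]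
        have hre : (∏ b : β, e (g b) (f (σ b))) = ∏ b : β, e (g (σ⁻¹ b)) (f b) := by
          rw [← Equiv.prod_comp σ (fun b => e (g (σ⁻¹ b)) (f b))]
          apply Finset.prod_congr rfl
          intro b _
          simp
        rw [hre, ← Finset.prod_mul_distrib]
        ring
    _ = (∏ b : β, lam (g b)) * ∏ b : β, ∑ x : X, (e (g b) x * e (g (σ⁻¹ b)) x) := by
        rw [← Finset.mul_sum]
        congr 1
        rw [Finset.prod_univ_sum (fun _ => (univ : Finset X))
          (fun b x => e (g b) x * e (g (σ⁻¹ b)) x), Fintype.piFinset_univ]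
    _ = (∏ b : β, lam (g b)) * ∏ b : β, (if g (σ b) = g b then (1:ℝ) else 0) := by
        congr 1
        have h1 : (∏ b : β, ∑ x : X, (e (g b) x * e (g (σ⁻¹ b)) x))
            = ∏ b : β, (if g b = g (σ⁻¹ b) then (1:ℝ) else 0) :=
          Finset.prod_congr rfl fun b _ => horth _ _
        rw [h1, ← Equiv.prod_comp σ (fun b => if g b = g (σ⁻¹ b) then (1:ℝ) else 0)]
        apply Finset.prod_congr rfl
        intro b _
        simp
    _ = ∏ b : β, (lam (g b) * if g (σ b) = g b then 1 else 0) := by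
        rw [← Finset.prod_mul_distrib]

end Expand

/-- For bijections `m₁, m₂` with `d = n - |m₁ ∩ m₂|` differences,
`B_{m₁,m₂}(z,z) ≤ (trace ((z zᵀ)²))^{d/2}`, where `z` is the entrywise square root of the
joint distribution `p`. -/
theorem generating_function_le_trace_sq_pow
    {Ua Ub Xa Xb : Type*} [Fintype Ua] [Fintype Ub] [Fintype Xa] [Fintype Xb]
    [DecidableEq Ua] [DecidableEq Ub] [DecidableEq Xa]
    (p : Xa × Xb → ℝ) (hp : ∀ a, 0 ≤ p a) (hsum : ∑ a : Xa × Xb, p a = 1)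
    (z : Matrix Xa Xb ℝ) (hz : ∀ i j, z i j = Real.sqrt (p (i, j)))
    (m₁ m₂ : Ua ≃ Ub)
    (d : ℕ) (hd : d = Fintype.card Ua - Fintype.card {u : Ua // m₁ u = m₂ u}) :
    (∑ fa : Ua → Xa, ∑ fb : Ub → Xb,
        (∏ u : Ua, z (fa u) (fb (m₁ u))) * (∏ u : Ua, z (fa u) (fb (m₂ u))))
      ≤ (Matrix.trace ((z * zᵀ) ^ 2)) ^ ((d : ℝ) / 2) := by
  classical
  -- nonemptiness
  have hXab : Nonempty (Xa × Xb) := by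
    by_contra h
    rw [not_nonempty_iff] at h
    rw [Finset.univ_eq_empty, Finset.sum_empty] at hsum
    norm_num at hsum
  have hXa : Nonempty Xa := ⟨hXab.some.1⟩
  have hXb : Nonempty Xb := ⟨hXab.some.2⟩
  -- the Gram matrix
  set A : Matrix Xb Xb ℝ := zᴴ * z with hA_def
  have hAps : A.PosSemidef := Matrix.posSemidef_conjTranspose_mul_self z
  obtain ⟨e, lam, hlam0, hAxy, horth, htrA, htrAA⟩ := exists_eigen A hAps
  have hAentry : ∀ x y : Xb, A x y = ∑ i : Xa, z i x * z i y := by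
    intro x y
    rw [hA_def, Matrix.mul_apply]
    apply Finset.sum_congr rfl
    intro i _
    rw [Matrix.conjTranspose_apply]
    simp
  have hz2 : ∀ i j, z i j * z i j = p (i, j) := by
    intro i j
    rw [hz]
    exact Real.mul_self_sqrt (hp _)
  -- trace A = 1
  have htrace1 : Matrix.trace A = 1 := by
    rw [Matrix.trace]
    calc ∑ x, A.diag x = ∑ x : Xb, ∑ i : Xa, z i x * z i x := by
          apply Finset.sum_congr rfl
          intro x _
          rw [Matrix.diag_apply, hAentry]
      _ = ∑ i : Xa, ∑ x : Xb, p (i, x) := by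
          rw [Finset.sum_comm]
          apply Finset.sum_congr rfl
          intro i _
          exact Finset.sum_congr rfl fun x _ => hz2 i x
      _ = 1 := by rw [← Fintype.sum_prod_type]; exact hsum
  have hlam1 : ∑ k, lam k = 1 := by rw [← htrA]; exact htrace1
  -- the trace on the RHS equals ∑ lam²
  have hzt : zᴴ = zᵀ := by
    ext i j
    rw [Matrix.conjTranspose_apply, Matrix.transpose_apply]
    simp
  have hTeq : Matrix.trace ((z * zᵀ) ^ 2) = ∑ k, (lam k) ^ 2 := by
    rw [← htrAA]
    have h1 : (z * zᵀ) ^ 2 = z * (zᵀ * z * zᵀ) := by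
      rw [pow_two]
      simp only [Matrix.mul_assoc]
    rw [h1, Matrix.trace_mul_comm z (zᵀ * z * zᵀ)]
    congr 1
    rw [hA_def, hzt]
    simp only [Matrix.mul_assoc]
  -- the permutation σ = m₂ ∘ m₁⁻¹
  set σ : Equiv.Perm Ub := m₁.symm.trans m₂ with hσ_def
  -- reduce the LHS
  have hLHS : (∑ fa : Ua → Xa, ∑ fb : Ub → Xb,
        (∏ u : Ua, z (fa u) (fb (m₁ u))) * (∏ u : Ua, z (fa u) (fb (m₂ u))))
      = ∑ fb : Ub → Xb, ∏ b : Ub, A (fb b) (fb (σ b)) := by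
    rw [Finset.sum_comm]
    apply Finset.sum_congr rfl
    intro fb _
    calc ∑ fa : Ua → Xa, (∏ u : Ua, z (fa u) (fb (m₁ u))) * (∏ u : Ua, z (fa u) (fb (m₂ u)))
        = ∑ fa : Ua → Xa, ∏ u : Ua, (z (fa u) (fb (m₁ u)) * z (fa u) (fb (m₂ u))) := by
          apply Finset.sum_congr rfl
          intro fa _
          rw [← Finset.prod_mul_distrib]
      _ = ∏ u : Ua, ∑ x : Xa, (z x (fb (m₁ u)) * z x (fb (m₂ u))) := by
          rw [Finset.prod_univ_sum (fun _ => (univ : Finset Xa))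
            (fun u x => z x (fb (m₁ u)) * z x (fb (m₂ u))), Fintype.piFinset_univ]
      _ = ∏ u : Ua, A (fb (m₁ u)) (fb (m₂ u)) := by
          apply Finset.prod_congr rfl
          intro u _
          rw [hAentry]
      _ = ∏ b : Ub, A (fb b) (fb (σ b)) := by
          rw [← Equiv.prod_comp m₁ (fun b => A (fb b) (fb (σ b)))]
          apply Finset.prod_congr rfl
          intro u _
          simp [hσ_def]
  -- identify d with the support of σ
  have hcardd : d = σ.support.card := by
    rw [hd]
    have hequiv : {u : Ua // m₁ u = m₂ u} ≃ {b : Ub // σ b = b} := by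
      apply Equiv.subtypeEquiv m₁
      intro u
      simp only [hσ_def, Equiv.trans_apply, Equiv.symm_apply_apply]
      exact ⟨fun h => h.symm, fun h => h.symm⟩
    have h1 : Fintype.card {u : Ua // m₁ u = m₂ u} = Fintype.card {b : Ub // σ b = b} :=
      Fintype.card_congr hequiv
    have h2 : Fintype.card {b : Ub // σ b = b} = (σ.supportᶜ).card := by
      rw [Fintype.card_subtype]
      congr 1
      ext b
      simp [Equiv.Perm.mem_support]
    have h3 : Fintype.card Ua = Fintype.card Ub := Fintype.card_congr m₁
    have h4 := Finset.card_compl_add_card σ.support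
    omega
  rw [hLHS, hcardd, hTeq]
  rw [sum_prod_eq_lambda A e lam hAxy horth σ]
  exact lambda_sum_le lam hlam0 hlam1 σ
end

section
/- Data processing inequality for cycle mutual information: let p be a distribution on X, q : X → P(Y) a channel, and r : Y → P(Z) a channel. Then for every integer ℓ ≥ 2, I°_ℓ(diag(p)·q) ≥ I°_ℓ(diag(p)·q·r), where diag(p)·q is the joint distribution on X × Y with entries p(i)q(i,k). -/
open Matrix Finset

/-- Entrywise nonnegativity and monotonicity of matrix powers. -/
lemma pow_entrywise_mono {n : Type*} [Fintype n] [DecidableEq n]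
    {A B : Matrix n n ℝ} (hA : ∀ i j, 0 ≤ A i j) (hAB : ∀ i j, A i j ≤ B i j) (ℓ : ℕ) :
    (∀ i j, 0 ≤ (A ^ ℓ) i j) ∧ (∀ i j, (A ^ ℓ) i j ≤ (B ^ ℓ) i j) := by
  induction ℓ with
  | zero =>
    constructor <;> intro i j <;> simp [Matrix.one_apply]
    · positivity
  | succ m ih =>
    constructor
    · intro i j
      rw [pow_succ, Matrix.mul_apply]
      exact Finset.sum_nonneg fun k _ => mul_nonneg (ih.1 i k) (hA k j)
    · intro i j
      rw [pow_succ, pow_succ, Matrix.mul_apply, Matrix.mul_apply]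
      refine Finset.sum_le_sum fun k _ => mul_le_mul (ih.2 i k) (hAB k j) (hA k j) ?_
      exact (ih.1 i k).trans (ih.2 i k)

/-- Diagonal entries of powers of entrywise-nonnegative matrices dominate powers of
diagonal entries. -/
lemma pow_diag_le {n : Type*} [Fintype n] [DecidableEq n]
    {A : Matrix n n ℝ} (hA : ∀ i j, 0 ≤ A i j) (ℓ : ℕ) (i : n) :
    (A i i) ^ ℓ ≤ (A ^ ℓ) i i := by
  induction ℓ with
  | zero => simp [Matrix.one_apply]
  | succ m ih =>
    rw [pow_succ, pow_succ, Matrix.mul_apply]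
    calc A i i ^ m * A i i ≤ (A ^ m) i i * A i i :=
          mul_le_mul_of_nonneg_right ih (hA i i)
      _ ≤ ∑ k, (A ^ m) i k * A k i :=
          Finset.single_le_sum (f := fun k => (A ^ m) i k * A k i)
            (fun k _ => mul_nonneg ((pow_entrywise_mono hA (fun a b => le_refl _) m).1 i k)
              (hA k i)) (Finset.mem_univ i)

/-- Data processing inequality for cycle mutual information: for a source distribution `p`
on `X`, a channel `q : X → P(Y)` and a further channel `r : Y → P(Z)`, and integer `ℓ ≥ 2`,
`I°_ℓ(diag(p)·q) ≥ I°_ℓ(diag(p)·q·r)`, where `diag(p)·q` is the joint distribution on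
`X × Y` with entries `p i * q i k` and `diag(p)·q·r` has entries `p i * (∑ k, q i k * r k l)`. -/
theorem cycleMutualInformation_data_processing
    {X Y Z : Type*} [Fintype X] [Fintype Y] [Fintype Z] [DecidableEq X]
    (p : X → ℝ) (hp : ∀ i, 0 ≤ p i) (hp1 : ∑ i, p i = 1)
    (q : Matrix X Y ℝ) (hq : ∀ i k, 0 ≤ q i k) (hq1 : ∀ i, ∑ k, q i k = 1)
    (r : Matrix Y Z ℝ) (hr : ∀ k l, 0 ≤ r k l) (hr1 : ∀ k, ∑ l, r k l = 1)
    (z : Matrix X Y ℝ) (hz : ∀ i k, z i k = Real.sqrt (p i * q i k))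
    (w : Matrix X Z ℝ) (hw : ∀ i l, w i l = Real.sqrt (p i * (∑ k, q i k * r k l)))
    (ℓ : ℕ) (hℓ : 2 ≤ ℓ) :
    (1 / (1 - (ℓ : ℝ))) * Real.log (Matrix.trace ((w * wᵀ) ^ ℓ))
      ≤ (1 / (1 - (ℓ : ℝ))) * Real.log (Matrix.trace ((z * zᵀ) ^ ℓ)) := by
  set A := z * zᵀ with hA
  set B := w * wᵀ with hB
  -- A is entrywise nonnegative
  have hApos : ∀ i j, 0 ≤ A i j := by
    intro i j
    rw [hA, Matrix.mul_apply]
    refine Finset.sum_nonneg fun k _ => ?_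
    rw [Matrix.transpose_apply, hz, hz]
    positivity
  -- key entrywise inequality A ≤ B (Bhattacharyya coefficient can't decrease)
  have hAB : ∀ i j, A i j ≤ B i j := by
    intro i j
    rw [hA, hB, Matrix.mul_apply, Matrix.mul_apply]
    simp only [Matrix.transpose_apply, hz, hw]
    have key : (∑ k, Real.sqrt (q i k) * Real.sqrt (q j k))
          ≤ ∑ l, Real.sqrt (∑ k, q i k * r k l) * Real.sqrt (∑ k, q j k * r k l) := by
      have step1 : (∑ k, Real.sqrt (q i k) * Real.sqrt (q j k))
          = ∑ l, ∑ k, Real.sqrt (q i k * r k l) * Real.sqrt (q j k * r k l) := by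
        rw [Finset.sum_comm]
        refine Finset.sum_congr rfl fun k _ => ?_
        have h2 : ∀ l, Real.sqrt (q i k * r k l) * Real.sqrt (q j k * r k l)
            = (Real.sqrt (q i k) * Real.sqrt (q j k)) * r k l := by
          intro l
          rw [Real.sqrt_mul (hq i k), Real.sqrt_mul (hq j k)]
          rw [show Real.sqrt (q i k) * Real.sqrt (r k l) *
              (Real.sqrt (q j k) * Real.sqrt (r k l))
              = Real.sqrt (q i k) * Real.sqrt (q j k) *
                (Real.sqrt (r k l) * Real.sqrt (r k l)) by ring]
          rw [Real.mul_self_sqrt (hr k l)]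
        simp only [h2, ← Finset.mul_sum, hr1 k, mul_one]
      rw [step1]
      refine Finset.sum_le_sum fun l _ => ?_
      exact Real.sum_sqrt_mul_sqrt_le _ (fun k => mul_nonneg (hq i k) (hr k l))
        (fun k => mul_nonneg (hq j k) (hr k l))
    have e1 : ∑ k, Real.sqrt (p i * q i k) * Real.sqrt (p j * q j k)
        = Real.sqrt (p i) * Real.sqrt (p j)
          * ∑ k, Real.sqrt (q i k) * Real.sqrt (q j k) := by
      rw [Finset.mul_sum]
      refine Finset.sum_congr rfl fun k _ => ?_
      rw [Real.sqrt_mul (hp i), Real.sqrt_mul (hp j)]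
      ring
    have e2 : ∑ l, Real.sqrt (p i * ∑ k, q i k * r k l)
            * Real.sqrt (p j * ∑ k, q j k * r k l)
        = Real.sqrt (p i) * Real.sqrt (p j)
          * ∑ l, Real.sqrt (∑ k, q i k * r k l) * Real.sqrt (∑ k, q j k * r k l) := by
      rw [Finset.mul_sum]
      refine Finset.sum_congr rfl fun l _ => ?_
      rw [Real.sqrt_mul (hp i), Real.sqrt_mul (hp j)]
      ring
    rw [e1, e2]
    exact mul_le_mul_of_nonneg_left key (by positivity)
  -- diagonal entries of A are p i
  have hdiag : ∀ i, A i i = p i := by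
    intro i
    rw [hA, Matrix.mul_apply]
    have : ∀ k, z i k * zᵀ k i = p i * q i k := by
      intro k
      rw [Matrix.transpose_apply, hz, Real.mul_self_sqrt (mul_nonneg (hp i) (hq i k))]
    simp only [this, ← Finset.mul_sum, hq1 i, mul_one]
  -- trace inequality
  have hmono := pow_entrywise_mono hApos hAB ℓ
  have htr : Matrix.trace (A ^ ℓ) ≤ Matrix.trace (B ^ ℓ) :=
    Finset.sum_le_sum fun i _ => hmono.2 i i
  -- positivity of trace (A ^ ℓ)
  have ⟨i0, hi0⟩ : ∃ i, 0 < p i := by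
    by_contra h
    push_neg at h
    have : ∑ i, p i = 0 := Finset.sum_eq_zero fun i _ => le_antisymm (h i) (hp i)
    rw [hp1] at this; norm_num at this
  have htrpos : 0 < Matrix.trace (A ^ ℓ) := by
    have h1 : (0 : ℝ) < p i0 ^ ℓ := pow_pos hi0 ℓ
    have h2 : p i0 ^ ℓ ≤ (A ^ ℓ) i0 i0 := by
      rw [← hdiag i0]; exact pow_diag_le hApos ℓ i0
    have h3 : (A ^ ℓ) i0 i0 ≤ Matrix.trace (A ^ ℓ) :=
      Finset.single_le_sum (f := fun i => (A ^ ℓ) i i)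
        (fun i _ => hmono.1 i i) (Finset.mem_univ i0)
    linarith
  -- finish
  have hlog : Real.log (Matrix.trace (A ^ ℓ)) ≤ Real.log (Matrix.trace (B ^ ℓ)) :=
    Real.log_le_log htrpos htr
  have hc : (1 : ℝ) / (1 - (ℓ : ℝ)) ≤ 0 := by
    have : (2 : ℝ) ≤ (ℓ : ℝ) := by exact_mod_cast hℓ
    apply div_nonpos_of_nonneg_of_nonpos <;> linarith
  exact mul_le_mul_of_nonpos_left hlog hc
end
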